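/- Let n ≥ 3 be odd and let A be the GDN matrix of the previous construction (bidiagonal with corner entry ε, d_n = 0, all eigenvalues positive and distinct). Then the exponential polynomial p(α) = (A^α)_{nn} satisfies p(α) < 0 for all α ∈ (n−2, n−1). In particular the GDN critical exponent for n×n matrices is at least n−1. -/

import Mathlib

open Matrix

/-- The continuous power `A^α := S * D^α * S⁻¹` of a diagonalizable matrix
`A = S * diagonal e * S⁻¹`. -/
noncomputable def contPow {n : ℕ} (S : Matrix (Fin n) (Fin n) ℝ) (e : Fin n → ℝ) (α : ℝ) :
    Matrix (Fin n) (Fin n) ℝ :=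
  S * Matrix.diagonal (fun i => e i ^ α) * S⁻¹


open Polynomial Finset

lemma iterRolle : ∀ (m : ℕ) (g : ℝ → ℝ) (y : ℕ → ℝ),
    (∀ i, i < m + 1 → y i < y (i + 1)) →
    (∀ i, i ≤ m + 1 → g (y i) = 0) →
    ContinuousOn g (Set.Icc (y 0) (y (m + 1))) →
    (∀ k, 1 ≤ k → ContinuousOn (deriv^[k] g) (Set.Ioi (y 0))) →
    ∃ ξ, y 0 < ξ ∧ ξ < y (m + 1) ∧ deriv^[m + 1] g ξ = 0 := by
  intro m
  induction m with
  | zero =>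
    intro g y hlt hz hc _
    obtain ⟨c, hc1, hc2⟩ := exists_deriv_eq_zero (hlt 0 (by omega)) hc
      ((hz 0 (by omega)).trans (hz 1 (by omega)).symm)
    exact ⟨c, hc1.1, hc1.2, by simpa using hc2⟩
  | succ m ih =>
    intro g y hlt hz hc hck
    have hmono : ∀ j, j ≤ m + 2 → ∀ i, i ≤ j → y i ≤ y j := by
      intro j hj
      induction j with
      | zero => intro i hi; simp [Nat.le_zero.mp hi]
      | succ j ihj =>
        intro i hi
        rcases Nat.lt_or_ge i (j+1) with h | h
        · exact le_trans (ihj (by omega) i (by omega)) (le_of_lt (hlt j (by omega)))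
        · have : i = j + 1 := by omega
          subst this; rfl
    have H : ∀ i : ℕ, ∃ c, i ≤ m + 1 → y i < c ∧ c < y (i + 1) ∧ deriv g c = 0 := by
      intro i
      rcases Nat.lt_or_ge (m + 1) i with h | h
      · exact ⟨0, by omega⟩
      · obtain ⟨c, hc1, hc2⟩ := exists_deriv_eq_zero (hlt i (by omega))
          (hc.mono (Set.Icc_subset_Icc (hmono i (by omega) 0 (by omega))
            (hmono (m+2) le_rfl (i+1) (by omega))))
          ((hz i (by omega)).trans (hz (i+1) (by omega)).symm)
        exact ⟨c, fun _ => ⟨hc1.1, hc1.2, hc2⟩⟩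
    choose y' hy' using H
    have hy'0 : y 0 < y' 0 := (hy' 0 (by omega)).1
    obtain ⟨ξ, h1, h2, h3⟩ := ih (deriv g) y'
      (fun i hi => lt_trans (hy' i (by omega)).2.1 (hy' (i+1) (by omega)).1)
      (fun i hi => (hy' i (by omega)).2.2)
      (by
        have := hck 1 le_rfl
        simp only [Function.iterate_one] at this
        exact this.mono (fun x hx => lt_of_lt_of_le hy'0 hx.1))
      (by
        intro k hk
        have := hck (k+1) (by omega)
        rw [Function.iterate_succ_apply] at this
        exact this.mono (fun x hx => lt_trans hy'0 hx))
    refine ⟨ξ, lt_trans hy'0 h1, lt_trans h2 (hy' (m+1) le_rfl).2.1, ?_⟩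
    rw [Function.iterate_succ_apply]
    exact h3


lemma keyNeg {n : ℕ} (hn : 3 ≤ n) (hodd : Odd n) (e : Fin n → ℝ) (he : ∀ i, 0 < e i)
    (hinj : Function.Injective e) (b : Fin n → ℝ)
    (hmom : ∀ k : ℕ, k < n → ∑ j, b j * e j ^ k = if k = 0 then 1 else 0)
    (α : ℝ) (hα1 : (n : ℝ) - 2 < α) (hα2 : α < (n : ℝ) - 1) :
    ∑ j, b j * e j ^ α < 0 := by
  obtain ⟨m, rfl⟩ : ∃ m, n = m + 1 := ⟨n - 1, by omega⟩
  have hm : 2 ≤ m := by omega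
  have hα0 : 0 < α := by
    have : (1 : ℝ) ≤ (m : ℝ) - 1 := by
      have : (2 : ℝ) ≤ m := by exact_mod_cast hm
      linarith
    push_cast at hα1; linarith
  have hinjOn : Set.InjOn e ↑(Finset.univ : Finset (Fin (m+1))) := hinj.injOn
  set Q : ℝ[X] := Lagrange.interpolate Finset.univ e (fun j => e j ^ α) with hQ
  have hQdeg : Q.degree < (m + 1 : ℕ) := by
    simpa [hQ] using Lagrange.degree_interpolate_lt (fun j => e j ^ α) hinjOn
  have hQnat : Q.natDegree < m + 1 := by
    rcases eq_or_ne Q 0 with h | h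
    · simp [h]
    · exact (Polynomial.natDegree_lt_iff_degree_lt h).mpr (by exact_mod_cast hQdeg)
  have hnode : ∀ j, Q.eval (e j) = e j ^ α :=
    fun j => Lagrange.eval_interpolate_at_node _ hinjOn (Finset.mem_univ j)
  -- step 1 : the sum equals Q.eval 0
  have step1 : ∑ j, b j * e j ^ α = Q.eval 0 := by
    have : ∀ j, b j * e j ^ α = ∑ k ∈ Finset.range (m+1), Q.coeff k * e j ^ k * b j := by
      intro j
      rw [← hnode j, Polynomial.eval_eq_sum_range' hQnat, Finset.mul_sum]
      exact Finset.sum_congr rfl (fun k _ => by ring)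
    rw [Finset.sum_congr rfl (fun j _ => this j), Finset.sum_comm]
    have : ∀ k ∈ Finset.range (m+1), (∑ j, Q.coeff k * e j ^ k * b j)
        = Q.coeff k * (if k = 0 then 1 else 0) := by
      intro k hk
      rw [← hmom k (Finset.mem_range.mp hk), Finset.mul_sum]
      exact Finset.sum_congr rfl (fun j _ => by ring)
    rw [Finset.sum_congr rfl this]
    rw [Finset.sum_eq_single 0 (fun k _ hk => by simp [hk]) (by simp)]
    simp [Polynomial.coeff_zero_eq_eval_zero]
  rw [step1]
  -- setup auxiliary function
  set prodE : ℝ := ∏ i, e i with hprodE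
  have hprodpos : 0 < prodE := Finset.prod_pos (fun i _ => he i)
  set lam : ℝ := Q.eval 0 / prodE with hlam
  set Pe : ℝ[X] := ∏ i, (X - C (e i)) with hPe
  set P : ℝ[X] := Q + C lam * Pe with hP
  set K : ℝ → ℝ := fun t => t ^ α - P.eval t with hK
  have hPe0 : Pe.eval 0 = -prodE := by
    rw [hPe, Polynomial.eval_prod]
    have : ∀ i : Fin (m+1), (X - C (e i)).eval 0 = -1 * e i := by intro i; simp
    rw [Finset.prod_congr rfl (fun i _ => this i), Finset.prod_mul_distrib,
      Finset.prod_const, Finset.card_univ, Fintype.card_fin, hodd.neg_one_pow]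
    ring
  have hPeej : ∀ j, Pe.eval (e j) = 0 := by
    intro j
    rw [hPe, Polynomial.eval_prod]
    exact Finset.prod_eq_zero (Finset.mem_univ j) (by simp)
  have hK0 : K 0 = 0 := by
    simp only [hK, hP, Polynomial.eval_add, Polynomial.eval_mul, Polynomial.eval_C, hPe0,
      Real.zero_rpow (ne_of_gt hα0), hlam]
    field_simp
    ring
  have hKe : ∀ j, K (e j) = 0 := by
    intro j
    simp only [hK, hP, Polynomial.eval_add, Polynomial.eval_mul, Polynomial.eval_C, hPeej j,
      hnode j]
    ring
  -- derivative formula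
  set c : ℕ → ℝ := fun k => ∏ j ∈ Finset.range k, (α - j) with hc
  have hD : ∀ k, ∀ x : ℝ, x ∈ Set.Ioi (0:ℝ) →
      deriv^[k] K x = c k * x ^ (α - k) - ((derivative^[k] P)).eval x := by
    intro k
    induction k with
    | zero => intro x _; simp [hK, hc]
    | succ k ih =>
      intro x hx
      have hev : deriv^[k] K =ᶠ[nhds x]
          fun y => c k * y ^ (α - k) - ((derivative^[k] P)).eval y := by
        filter_upwards [isOpen_Ioi.mem_nhds hx] with y hy using ih y hy
      rw [Function.iterate_succ_apply', hev.deriv_eq]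
      have h1 : HasDerivAt (fun y : ℝ => c k * y ^ (α - (k:ℝ)) - ((derivative^[k] P)).eval y)
          (c k * ((α - k) * x ^ (α - (k:ℝ) - 1)) - ((derivative (derivative^[k] P))).eval x) x :=
        ((Real.hasDerivAt_rpow_const (Or.inl (ne_of_gt (Set.mem_Ioi.mp hx)))).const_mul
          (c k)).sub (Polynomial.hasDerivAt _ x)
      rw [h1.deriv, Function.iterate_succ_apply']
      have h2 : α - (k:ℝ) - 1 = α - ((k+1 : ℕ) : ℝ) := by push_cast; ring
      have h3 : c (k+1) = c k * (α - k) := by rw [hc]; exact Finset.prod_range_succ _ _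
      rw [h2, h3]; ring
  -- continuity facts
  have hrpowCont : ∀ β : ℝ, ContinuousOn (fun y : ℝ => y ^ β) (Set.Ioi (0:ℝ)) :=
    fun β x hx => (Real.continuousAt_rpow_const x β (Or.inl (ne_of_gt hx))).continuousWithinAt
  have hCk : ∀ k, 1 ≤ k → ContinuousOn (deriv^[k] K) (Set.Ioi (0:ℝ)) := by
    intro k _
    exact ContinuousOn.congr
      ((continuousOn_const.mul (hrpowCont (α - k))).sub (Polynomial.continuous _).continuousOn)
      (fun x hx => hD k x hx)
  -- sorted nodes
  set s : Finset ℝ := Finset.image e Finset.univ with hs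
  have hcard : s.card = m + 1 := by
    rw [hs, Finset.card_image_of_injective _ hinj, Finset.card_univ, Fintype.card_fin]
  set σ := s.orderIsoOfFin hcard with hσ
  set y : ℕ → ℝ := fun i => if h : 0 < i ∧ i ≤ m + 1 then (σ ⟨i - 1, by omega⟩ : ℝ) else 0
    with hy
  have hy0 : y 0 = 0 := by simp [hy]
  have hymem : ∀ i, 0 < i → i ≤ m + 1 → ∃ j, e j = y i := by
    intro i h1 h2
    have e1 : y i = (σ ⟨i - 1, by omega⟩ : ℝ) := by simp [hy, h1, h2]
    have h3 : (σ ⟨i - 1, by omega⟩ : ℝ) ∈ s := (σ ⟨i - 1, by omega⟩).2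
    obtain ⟨j, -, hj⟩ := Finset.mem_image.mp h3
    exact ⟨j, by rw [e1, ← hj]⟩
  have hylt : ∀ i, i < m + 1 → y i < y (i + 1) := by
    intro i hi
    rcases Nat.eq_zero_or_pos i with h0 | h0
    · subst h0
      obtain ⟨j, hj⟩ := hymem 1 (by omega) (by omega)
      rw [hy0, ← hj]
      exact he j
    · have e1 : y i = (σ ⟨i - 1, by omega⟩ : ℝ) := by simp [hy, h0, Nat.le_of_lt hi]
      have e2 : y (i+1) = (σ ⟨i, by omega⟩ : ℝ) := by simp [hy, Nat.lt_succ_iff.mp hi]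
      rw [e1, e2, Subtype.coe_lt_coe]
      exact σ.strictMono (by simp [Fin.lt_def]; omega)
  have hyz : ∀ i, i ≤ m + 1 → K (y i) = 0 := by
    intro i hi
    rcases Nat.eq_zero_or_pos i with h0 | h0
    · subst h0; rw [hy0]; exact hK0
    · obtain ⟨j, hj⟩ := hymem i h0 hi
      rw [← hj]; exact hKe j
  -- apply iterated Rolle
  obtain ⟨ξ, hξ1, hξ2, hξ3⟩ := iterRolle m K y hylt hyz
    (by
      apply ContinuousOn.sub
      · exact fun x hx => (Real.continuousAt_rpow_const x α
          (Or.inr (le_of_lt hα0))).continuousWithinAt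
      · exact (Polynomial.continuous _).continuousOn)
    (by rw [hy0]; exact hCk)
  rw [hy0] at hξ1
  -- identify the top derivative of P
  have hQd : derivative^[m+1] Q = 0 := Polynomial.iterate_derivative_eq_zero hQnat
  have hPemonic : Pe.Monic := Polynomial.monic_prod_of_monic _ _
    (fun i _ => Polynomial.monic_X_sub_C (e i))
  have hPenat : Pe.natDegree = m + 1 := by
    rw [hPe, Polynomial.natDegree_prod _ _ (fun i _ => Polynomial.X_sub_C_ne_zero (e i))]
    simp
  have hPnat : P.natDegree ≤ m + 1 := by
    refine le_trans (Polynomial.natDegree_add_le _ _) ?_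
    refine max_le (le_of_lt hQnat) (le_trans (Polynomial.natDegree_C_mul_le _ _) ?_)
    rw [hPenat]
  have hDnat : (derivative^[m+1] P).natDegree = 0 :=
    Nat.le_zero.mp (le_trans (Polynomial.natDegree_iterate_derivative _ _) (by omega))
  have hPcoeff : P.coeff (m+1) = lam := by
    rw [hP, Polynomial.coeff_add, Polynomial.coeff_C_mul,
      Polynomial.coeff_eq_zero_of_natDegree_lt hQnat, ← hPenat, hPemonic.coeff_natDegree]
    ring
  have hDC : derivative^[m+1] P = C ((Nat.factorial (m+1) : ℝ) * lam) := by
    rw [Polynomial.eq_C_of_natDegree_le_zero (le_of_eq hDnat),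
      Polynomial.coeff_iterate_derivative, Nat.zero_add, Nat.descFactorial_self, hPcoeff]
    simp [nsmul_eq_mul]
  -- the sign computation
  have heq := hD (m+1) ξ hξ1
  rw [hξ3, hDC] at heq
  have heq2 : c (m+1) * ξ ^ (α - ((m+1:ℕ):ℝ)) = (Nat.factorial (m+1) : ℝ) * lam := by
    have := heq.symm
    simp only [Polynomial.eval_C] at this
    linarith [this]
  have hcneg : c (m+1) < 0 := by
    rw [hc]
    simp only
    rw [Finset.prod_range_succ]
    have h1 : (0:ℝ) < ∏ j ∈ Finset.range m, (α - j) := by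
      apply Finset.prod_pos
      intro j hj
      have hj' : (j:ℝ) + 1 ≤ m := by exact_mod_cast Finset.mem_range.mp hj
      push_cast at hα1
      linarith
    have h2 : α - (m:ℝ) < 0 := by push_cast at hα2; linarith
    exact mul_neg_of_pos_of_neg h1 h2
  have hξpow : 0 < ξ ^ (α - ((m+1:ℕ):ℝ)) := Real.rpow_pos_of_pos hξ1 _
  have hlamneg : lam < 0 := by
    have hfac : (0:ℝ) < (Nat.factorial (m+1) : ℝ) := by positivity
    nlinarith [mul_neg_of_neg_of_pos hcneg hξpow]
  have : Q.eval 0 = lam * prodE := by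
    rw [hlam, div_mul_cancel₀ _ (ne_of_gt hprodpos)]
  rw [this]
  exact mul_neg_of_neg_of_pos hlamneg hprodpos

/-- For odd `n ≥ 3` and the bidiagonal-plus-corner GDN matrix `A = S * diagonal e * S⁻¹`
(with positive distinct eigenvalues `e`), the entry `(A^α)_{nn}` is negative for all
`α ∈ (n-2, n-1)`.  In particular the GDN critical exponent for `n × n` matrices is at
least `n - 1`. -/
theorem bidiagonal_corner_negative_entry {n : ℕ} (hn : 3 ≤ n) (hodd : Odd n)
    (d : ℕ → ℝ) (ε : ℝ)
    (hdec : ∀ i, i + 1 < n → d (i + 1) < d i)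
    (hlast : d (n - 1) = 0)
    (hε : 0 < ε)
    (hεlt : ∀ i, i + 1 < n → ε < (d i - d (i + 1)) / 2)
    (A : Matrix (Fin n) (Fin n) ℝ)
    (hAdef : ∀ i j : Fin n, A i j =
      if (i : ℕ) = (j : ℕ) then d i
      else if (j : ℕ) = (i : ℕ) + 1 then ε
      else if (i : ℕ) = n - 1 ∧ (j : ℕ) = 0 then ε
      else 0)
    (S : Matrix (Fin n) (Fin n) ℝ) (e : Fin n → ℝ)
    (he : ∀ i, 0 < e i) (hinj : Function.Injective e)
    (hS : IsUnit S.det)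
    (hdiag : A = S * Matrix.diagonal e * S⁻¹) :
    ∀ α : ℝ, (n : ℝ) - 2 < α → α < (n : ℝ) - 1 →
      contPow S e α ⟨n - 1, by omega⟩ ⟨n - 1, by omega⟩ < 0 := by
  intro α hα1 hα2
  have hL : (((⟨n - 1, by omega⟩ : Fin n) : ℕ)) = n - 1 := rfl
  set L : Fin n := ⟨n - 1, by omega⟩ with hLdef
  set b : Fin n → ℝ := fun j => S L j * S⁻¹ j L with hb
  -- conjugation arithmetic
  have hmul : ∀ M N : Matrix (Fin n) (Fin n) ℝ,
      (S * M * S⁻¹) * (S * N * S⁻¹) = S * (M * N) * S⁻¹ := by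
    intro M N
    simp only [Matrix.mul_assoc]
    congr 1
    congr 1
    rw [← Matrix.mul_assoc S⁻¹ S (N * S⁻¹), Matrix.nonsing_inv_mul S hS, Matrix.one_mul]
  have hpow : ∀ k : ℕ, A ^ k = S * Matrix.diagonal (fun i => e i ^ k) * S⁻¹ := by
    intro k
    induction k with
    | zero =>
      rw [pow_zero, show (fun i => e i ^ (0:ℕ)) = fun _ => (1:ℝ) from funext fun i => pow_zero _,
        Matrix.diagonal_one, Matrix.mul_one, Matrix.mul_nonsing_inv S hS]
    | succ k ih =>
      rw [pow_succ, ih, hdiag, hmul, Matrix.diagonal_mul_diagonal,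
        show (fun i => e i ^ k * e i) = fun i => e i ^ (k+1) from funext fun i => (pow_succ _ _).symm]
  have hentry : ∀ (w : Fin n → ℝ), (S * Matrix.diagonal w * S⁻¹) L L = ∑ j, b j * w j := by
    intro w
    rw [Matrix.mul_apply]
    refine Finset.sum_congr rfl (fun j _ => ?_)
    rw [Matrix.mul_diagonal, hb]
    ring
  -- path counting
  have hzero : ∀ k : ℕ, 1 ≤ k → k ≤ n - 1 → ∀ j : Fin n, k ≤ (j : ℕ) → (A ^ k) L j = 0 := by
    intro k
    induction k with
    | zero => omega
    | succ k ih =>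
      intro _ h2 j hj
      rcases Nat.eq_zero_or_pos k with h0 | h0
      · subst h0
        rw [zero_add, pow_one, hAdef L j]
        have hjlt := j.isLt
        split_ifs with c1 c2 c3
        · exact hlast
        · exfalso; omega
        · exfalso; omega
        · rfl
      · rw [pow_succ, Matrix.mul_apply]
        apply Finset.sum_eq_zero
        intro m _
        rcases Nat.lt_or_ge (m : ℕ) k with hmk | hmk
        · have hA0 : A m j = 0 := by
            rw [hAdef m j]
            split_ifs with c1 c2 c3
            · exfalso; omega
            · exfalso; omega
            · exfalso; omega
            · rfl
          rw [hA0, mul_zero]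
        · rw [ih (by omega) (by omega) m hmk, zero_mul]
  -- moments
  have hmom : ∀ k : ℕ, k < n → ∑ j, b j * e j ^ k = if k = 0 then 1 else 0 := by
    intro k hk
    have h1 : (∑ j, b j * e j ^ k) = (A ^ k) L L := by
      rw [hpow k]; exact (hentry _).symm
    rcases Nat.eq_zero_or_pos k with h0 | h0
    · subst h0
      rw [h1, pow_zero, Matrix.one_apply_eq]
      simp
    · rw [h1, hzero k h0 (by omega) L (by omega), if_neg (by omega)]
  have hneg := keyNeg hn hodd e he hinj b hmom α hα1 hα2
  have hcp : contPow S e α L L = ∑ j, b j * e j ^ α := hentry _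
  calc contPow S e α L L = ∑ j, b j * e j ^ α := hcp
    _ < 0 := hneg
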